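/- For the Černý automaton C_n with n ≥ 2, for every i ∈ {0, …, n−1} and every j ∈ {0, …, n−2}, the word (ab)ʲ a bⁱ has defect 1 with excluded state i and duplicate state (i+j+1) mod n. Consequently, the graph Γ₁(C_n) contains every edge (p, q) with p ≠ q, and in particular Γ₁(C_n) is strongly connected. -/

import Mathlib

open Finset

/-- The action of a word (list of letters) on a state, applying letters left to right. -/
def act {Q A : Type*} (δ : Q → A → Q) (q : Q) (w : List A) : Q := w.foldl δ q

/-- The image of a set of states under the action of a word. -/
def img {Q A : Type*} [DecidableEq Q] (δ : Q → A → Q) (P : Finset Q) (w : List A) : Finset Q :=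
  P.image (fun q => act δ q w)

/-- `excl δ w = Q \ Q·w`. -/
def excl {Q A : Type*} [Fintype Q] [DecidableEq Q] (δ : Q → A → Q) (w : List A) : Finset Q :=
  Finset.univ \ img δ Finset.univ w

/-- `dupl δ w` : the set of states with at least two preimages under the action of `w`. -/
def dupl {Q A : Type*} [Fintype Q] [DecidableEq Q] (δ : Q → A → Q) (w : List A) : Finset Q :=
  Finset.univ.filter (fun p => ∃ q₁ q₂ : Q, q₁ ≠ q₂ ∧ act δ q₁ w = p ∧ act δ q₂ w = p)

/-- A DFA is completely reachable if every nonempty subset of states is the image of the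
full state set under the action of some word. -/
def CompletelyReachable {Q A : Type*} [Fintype Q] [DecidableEq Q] (δ : Q → A → Q) : Prop :=
  ∀ P : Finset Q, P.Nonempty → ∃ w : List A, img δ Finset.univ w = P

/-- The transition function of the Černý automaton `C_n`: the letter `false` (= a) sends
0 to 1 and fixes the other states; the letter `true` (= b) adds 1 modulo n. -/
def cernyδ (n : ℕ) (hn : 2 ≤ n) (q : Fin n) (x : Bool) : Fin n :=
  if x then ⟨(q.val + 1) % n, Nat.mod_lt _ (by omega)⟩
  else if q.val = 0 then ⟨1, by omega⟩ else q

/-- The word (ab)ʲ a bⁱ over the alphabet of C_n, with a = `false`, b = `true`,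
applied left to right. -/
def cernyWord (j i : ℕ) : List Bool :=
  (List.replicate j [false, true]).flatten ++ [false] ++ List.replicate i true

/- ======================= auxiliary lemmas ======================= -/

lemma mod_cancel_aux (m a j : ℕ) (hm : 0 < m) (ha : a < m) :
    ((a + j) % m + (m - j % m)) % m = a := by
  rw [Nat.mod_add_mod]
  have h1 : j % m < m := Nat.mod_lt _ hm
  have h2 : m * (j / m) + j % m = j := Nat.div_add_mod j m
  have h3 : a + j + (m - j % m) = a + m * (j / m) + m := by omega
  rw [h3, Nat.add_mod_right, Nat.add_mul_mod_self_left, Nat.mod_eq_of_lt ha]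

lemma mod_solve_aux (m r j : ℕ) (hm : 0 < m) (hr : r < m) :
    ((r + (m - j % m)) % m + j) % m = r := by
  rw [Nat.mod_add_mod]
  have h1 : j % m < m := Nat.mod_lt _ hm
  have h2 : m * (j / m) + j % m = j := Nat.div_add_mod j m
  have h3 : r + (m - j % m) + j = r + m * (j / m) + m := by omega
  rw [h3, Nat.add_mod_right, Nat.add_mul_mod_self_left, Nat.mod_eq_of_lt hr]

/-- Value of the action of the word (ab)ʲa on state q, as a natural number. -/
def Fval (n j q : ℕ) : ℕ := if q = 0 then j + 1 else (q - 1 + j) % (n - 1) + 1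

lemma Fval_lt (n j q : ℕ) (hn : 2 ≤ n) (hj : j ≤ n - 2) : Fval n j q < n := by
  unfold Fval; split
  · omega
  · have : (q - 1 + j) % (n - 1) < n - 1 := Nat.mod_lt _ (by omega)
    omega

lemma Fval_pos (n j q : ℕ) : 0 < Fval n j q := by unfold Fval; split <;> omega

lemma act_cons {Q A : Type*} (δ : Q → A → Q) (q : Q) (x : A) (w : List A) :
    act δ q (x :: w) = act δ (δ q x) w := rfl

lemma act_append {Q A : Type*} (δ : Q → A → Q) (q : Q) (u v : List A) :
    act δ q (u ++ v) = act δ (act δ q u) v := List.foldl_append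

lemma act_rep_true (n : ℕ) (hn : 2 ≤ n) (i : ℕ) (q : Fin n) :
    act (cernyδ n hn) q (List.replicate i true) = ⟨(q.val + i) % n, Nat.mod_lt _ (by omega)⟩ := by
  induction i generalizing q with
  | zero => simpa [act] using Fin.ext (by simp [Nat.mod_eq_of_lt q.isLt])
  | succ k ih =>
      rw [List.replicate_succ, act_cons, ih]
      apply Fin.ext
      simp only [cernyδ, if_true]
      rw [Nat.mod_add_mod]
      congr 1
      omega

lemma act_F (n : ℕ) (hn : 2 ≤ n) (j : ℕ) (hj : j ≤ n - 2) (q : Fin n) :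
    act (cernyδ n hn) q ((List.replicate j [false, true]).flatten ++ [false]) =
      ⟨Fval n j q.val, Fval_lt n j q.val hn hj⟩ := by
  induction j generalizing q with
  | zero =>
      apply Fin.ext
      have hq := q.isLt
      simp only [List.replicate_zero, List.flatten_nil, List.nil_append, act, List.foldl_cons,
        List.foldl_nil, cernyδ, if_neg (by simp : ¬(false = true)), Fval]
      rcases Nat.eq_zero_or_pos q.val with h | h
      · simp [h]
      · rw [if_neg (by omega), if_neg (by omega),
          Nat.mod_eq_of_lt (show q.val - 1 + 0 < n - 1 by omega)]
        omega
  | succ k ih =>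
      have hk : k ≤ n - 2 := by omega
      have h3n : 3 ≤ n := by omega
      rw [List.replicate_succ, List.flatten_cons, List.append_assoc, act_append]
      have e1 : act (cernyδ n hn) q [false, true] = cernyδ n hn (cernyδ n hn q false) true := rfl
      rcases Nat.eq_zero_or_pos q.val with h | h
      · have e2 : act (cernyδ n hn) q [false, true] = ⟨2, by omega⟩ := by
          rw [e1]; apply Fin.ext
          simp only [cernyδ, if_neg (by simp : ¬(false = true)), if_pos h, if_pos rfl]
          exact Nat.mod_eq_of_lt (by omega)
        rw [e2, ih hk]
        apply Fin.ext
        simp only [Fval, if_neg (by omega : ¬(2:ℕ) = 0), h, if_true, if_pos rfl]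
        rw [Nat.mod_eq_of_lt (show 2 - 1 + k < n - 1 by omega)]
        omega
      · have e3 : cernyδ n hn q false = q := by
          simp [cernyδ, Nat.pos_iff_ne_zero.mp h]
        rcases Nat.lt_or_ge q.val (n - 1) with h2 | h2
        · have e2 : act (cernyδ n hn) q [false, true] = ⟨q.val + 1, by omega⟩ := by
            rw [e1]; simp only [e3]; apply Fin.ext
            simp only [cernyδ, if_true]
            exact Nat.mod_eq_of_lt (by omega)
          rw [e2, ih hk]
          apply Fin.ext
          simp only [Fval, if_neg (by omega : ¬q.val + 1 = 0), if_neg (by omega : ¬q.val = 0)]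
          congr 2
          omega
        · have hq := q.isLt
          have hq1 : q.val = n - 1 := by omega
          have e2 : act (cernyδ n hn) q [false, true] = ⟨0, by omega⟩ := by
            rw [e1]; simp only [e3]; apply Fin.ext
            simp only [cernyδ, if_true]
            rw [show q.val + 1 = n by omega, Nat.mod_self]
          rw [e2, ih hk]
          apply Fin.ext
          simp only [Fval, if_true, if_pos rfl, if_neg (by omega : ¬q.val = 0)]
          rw [show q.val - 1 + (k + 1) = k + (n - 1) by omega, Nat.add_mod_right,
            Nat.mod_eq_of_lt (by omega : k < n - 1)]

lemma act_word (n : ℕ) (hn : 2 ≤ n) (j i : ℕ) (hj : j ≤ n - 2) (q : Fin n) :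
    act (cernyδ n hn) q (cernyWord j i) =
      ⟨(Fval n j q.val + i) % n, Nat.mod_lt _ (by omega)⟩ := by
  unfold cernyWord
  rw [act_append, act_F n hn j hj q, act_rep_true]

/-- In C_n, the word (ab)ʲ a bⁱ has defect 1 with excluded state i and duplicate state
(i+j+1) mod n; hence Γ₁(C_n) contains all edges (p, q) with p ≠ q and is strongly
connected. -/
theorem cerny_gamma1_complete (n : ℕ) (hn : 2 ≤ n) :
    (∀ (i : Fin n) (j : ℕ), j ≤ n - 2 →
      excl (cernyδ n hn) (cernyWord j i.val) = {i} ∧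
      dupl (cernyδ n hn) (cernyWord j i.val) =
        {⟨(i.val + j + 1) % n, Nat.mod_lt _ (by omega)⟩}) ∧
    (∀ p q : Fin n, p ≠ q →
      ∃ w : List Bool, excl (cernyδ n hn) w = {p} ∧ dupl (cernyδ n hn) w = {q}) ∧
    (∀ p q : Fin n, Relation.ReflTransGen
      (fun p q => ∃ w : List Bool, excl (cernyδ n hn) w = {p} ∧ dupl (cernyδ n hn) w = {q})
      p q) := by
  have hn0 : 0 < n := by omega
  have part1 : ∀ (i : Fin n) (j : ℕ), j ≤ n - 2 →
      excl (cernyδ n hn) (cernyWord j i.val) = {i} ∧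
      dupl (cernyδ n hn) (cernyWord j i.val) =
        {⟨(i.val + j + 1) % n, Nat.mod_lt _ (by omega)⟩} := by
    intro i j hj
    have key : ∀ q : Fin n, act (cernyδ n hn) q (cernyWord j i.val) =
        ⟨(Fval n j q.val + i.val) % n, Nat.mod_lt _ hn0⟩ :=
      fun q => act_word n hn j i.val hj q
    have hm : 0 < n - 1 := by omega
    constructor
    · -- excl = {i}
      ext p
      simp only [excl, img, Finset.mem_sdiff, Finset.mem_univ, true_and, Finset.mem_image,
        Finset.mem_singleton]
      constructor
      · intro hp
        by_contra hpi
        apply hp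
        have hdn : (p.val + (n - i.val % n)) % n < n := Nat.mod_lt _ hn0
        set d := (p.val + (n - i.val % n)) % n with hd
        have hdi : (d + i.val) % n = p.val := mod_solve_aux n p.val i.val hn0 p.isLt
        have hd0 : d ≠ 0 := by
          intro h0
          rw [h0, Nat.zero_add, Nat.mod_eq_of_lt i.isLt] at hdi
          exact hpi (Fin.ext hdi.symm)
        have hen : ((d - 1) + ((n-1) - j % (n-1))) % (n-1) < n - 1 := Nat.mod_lt _ hm
        set e := ((d - 1) + ((n-1) - j % (n-1))) % (n-1) with he
        refine ⟨⟨e + 1, by omega⟩, ?_⟩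
        rw [key]
        apply Fin.ext
        show (Fval n j (e + 1) + i.val) % n = p.val
        have hF : Fval n j (e + 1) = d := by
          simp only [Fval, if_neg (by omega : ¬e + 1 = 0), Nat.add_sub_cancel]
          have := mod_solve_aux (n-1) (d-1) j hm (by omega : d - 1 < n - 1)
          rw [← he] at this
          omega
        rw [hF]; exact hdi
      · rintro rfl ⟨q, hq⟩
        rw [key] at hq
        have hv : (Fval n j q.val + p.val) % n = p.val := congrArg Fin.val hq
        have hc := mod_cancel_aux n (Fval n j q.val) p.val hn0 (Fval_lt n j q.val hn hj)
        rw [hv, Nat.mod_eq_of_lt p.isLt, show p.val + (n - p.val) = n by omega,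
          Nat.mod_self] at hc
        have := Fval_pos n j q.val
        omega
    · -- dupl = {(i+j+1) % n}
      have inj : ∀ a b : Fin n, a.val ≠ 0 → b.val ≠ 0 →
          act (cernyδ n hn) a (cernyWord j i.val) = act (cernyδ n hn) b (cernyWord j i.val) →
          a = b := by
        intro a b ha hb hab
        rw [key, key] at hab
        have hv : (Fval n j a.val + i.val) % n = (Fval n j b.val + i.val) % n :=
          congrArg Fin.val hab
        have ca := mod_cancel_aux n (Fval n j a.val) i.val hn0 (Fval_lt n j a.val hn hj)
        have cb := mod_cancel_aux n (Fval n j b.val) i.val hn0 (Fval_lt n j b.val hn hj)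
        rw [hv] at ca
        have hF : Fval n j a.val = Fval n j b.val := ca.symm.trans cb
        simp only [Fval, if_neg ha, if_neg hb] at hF
        have hmm : (a.val - 1 + j) % (n-1) = (b.val - 1 + j) % (n-1) := by omega
        have da := mod_cancel_aux (n-1) (a.val - 1) j hm (by have := a.isLt; omega)
        have db := mod_cancel_aux (n-1) (b.val - 1) j hm (by have := b.isLt; omega)
        rw [hmm] at da
        apply Fin.ext
        omega
      have hF0 : Fval n j 0 = j + 1 := by simp [Fval]
      have hF1 : Fval n j 1 = j + 1 := by
        simp only [Fval, if_neg (by omega : ¬(1:ℕ) = 0)]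
        rw [Nat.mod_eq_of_lt (by omega : 1 - 1 + j < n - 1)]
        omega
      ext p
      simp only [dupl, Finset.mem_filter, Finset.mem_univ, true_and, Finset.mem_singleton]
      constructor
      · rintro ⟨q₁, q₂, hne, h1, h2⟩
        have hz : q₁.val = 0 ∨ q₂.val = 0 := by
          by_contra hc
          push_neg at hc
          exact hne (inj q₁ q₂ hc.1 hc.2 (h1.trans h2.symm))
        apply Fin.ext
        show p.val = (i.val + j + 1) % n
        rcases hz with hz | hz
        · rw [← h1, key]
          show (Fval n j q₁.val + i.val) % n = _
          rw [hz, hF0]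
          congr 1
          omega
        · rw [← h2, key]
          show (Fval n j q₂.val + i.val) % n = _
          rw [hz, hF0]
          congr 1
          omega
      · intro hp
        refine ⟨⟨0, by omega⟩, ⟨1, by omega⟩, by simp [Fin.ext_iff], ?_, ?_⟩
        · rw [key, hp]
          apply Fin.ext
          show (Fval n j 0 + i.val) % n = (i.val + j + 1) % n
          rw [hF0]; congr 1; omega
        · rw [key, hp]
          apply Fin.ext
          show (Fval n j 1 + i.val) % n = (i.val + j + 1) % n
          rw [hF1]; congr 1; omega
  have part2 : ∀ p q : Fin n, p ≠ q →
      ∃ w : List Bool, excl (cernyδ n hn) w = {p} ∧ dupl (cernyδ n hn) w = {q} := by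
    intro p q hpq
    have hjn : (q.val + (n - (p.val + 1) % n)) % n < n := Nat.mod_lt _ hn0
    set j := (q.val + (n - (p.val + 1) % n)) % n with hjdef
    have hsolve : (j + (p.val + 1)) % n = q.val := mod_solve_aux n q.val (p.val + 1) hn0 q.isLt
    have hj : j ≤ n - 2 := by
      by_contra hc
      have hj1 : j = n - 1 := by omega
      apply hpq
      apply Fin.ext
      rw [hj1, show n - 1 + (p.val + 1) = p.val + n by omega, Nat.add_mod_right,
        Nat.mod_eq_of_lt p.isLt] at hsolve
      exact hsolve
    obtain ⟨he, hd⟩ := part1 p j hj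
    refine ⟨cernyWord j p.val, he, ?_⟩
    rw [hd, Finset.singleton_inj]
    apply Fin.ext
    show (p.val + j + 1) % n = q.val
    rw [show p.val + j + 1 = j + (p.val + 1) by omega]
    exact hsolve
  refine ⟨part1, part2, ?_⟩
  intro p q
  by_cases h : p = q
  · subst h; exact Relation.ReflTransGen.refl
  · exact Relation.ReflTransGen.single (part2 p q h)
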